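/- (Hall's theorem on sums of Cantor sets) Let K and F be Cantor sets in ℝ, each admitting a slow subdivision satisfying the gap condition, and suppose the pair (K, F) satisfies the size condition: the diameter of K exceeds the length of every hole of F, and the diameter of F exceeds the length of every hole of K. Then K + F = [min K + min F, max K + max F]. -/

import Mathlib

open Set

/-- A Cantor set in `ℝ`: a nonempty, compact, perfect, totally disconnected subset. -/
def IsCantorSet (K : Set ℝ) : Prop :=
  K.Nonempty ∧ IsCompact K ∧ Perfect K ∧ IsTotallyDisconnected K

/-- A hole of a Cantor set `K`: a bounded connected component `(u,v)` of the complement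
of `K` inside `[min K, max K]`; its endpoints lie in `K`. -/
def IsHole (K : Set ℝ) (u v : ℝ) : Prop :=
  u < v ∧ u ∈ K ∧ v ∈ K ∧ Set.Ioo u v ∩ K = ∅

/-- A slow subdivision of a Cantor set `K`: a decreasing family `level n` of closed
sets, each a finite disjoint union of closed intervals, starting from
`[min K, max K]`, where at step `n` one connected component `[A n, D n]` of `level n`
is split by removing the open hole `(B n, C n)` (leaving the two nonempty closed
intervals `K^L = [A n, B n]` and `K^R = [C n, D n]`), and with `⋂ n, level n = K`. -/
structure SlowSubdivision (K : Set ℝ) where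
  A : ℕ → ℝ
  B : ℕ → ℝ
  C : ℕ → ℝ
  D : ℕ → ℝ
  hAB : ∀ n, A n ≤ B n
  hBC : ∀ n, B n < C n
  hCD : ∀ n, C n ≤ D n
  level : ℕ → Set ℝ
  level_zero : level 0 = Set.Icc (sInf K) (sSup K)
  /-- `[A n, D n]` is a connected component of `level n`. -/
  comp : ∀ n, Set.Icc (A n) (D n) = connectedComponentIn (level n) (A n)
  level_succ : ∀ n, level (n + 1) = level n \ Set.Ioo (B n) (C n)
  inter_eq : ⋂ n, level n = K

/-- The gap condition: each removed hole is strictly shorter than both adjacent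
remaining closed intervals. -/
def SlowSubdivision.GapCondition {K : Set ℝ} (s : SlowSubdivision K) : Prop :=
  ∀ n, s.C n - s.B n < s.B n - s.A n ∧ s.C n - s.B n < s.D n - s.C n

/-- A slow subdivision is monotone if the removed holes are ordered by
non-increasing length. -/
def SlowSubdivision.IsMonotone {K : Set ℝ} (s : SlowSubdivision K) : Prop :=
  ∀ n, s.C (n + 1) - s.B (n + 1) ≤ s.C n - s.B n

open Pointwise

attribute [local instance] Classical.propDecidable

namespace SlowSubdivision

variable {K : Set ℝ} (s : SlowSubdivision K)

lemma le_AD (n : ℕ) : s.A n ≤ s.D n :=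
  (s.hAB n).trans ((s.hBC n).le.trans (s.hCD n))

lemma Icc_subset_level (n : ℕ) : Icc (s.A n) (s.D n) ⊆ s.level n := by
  rw [s.comp n]; exact connectedComponentIn_subset _ _

lemma level_succ_subset (n : ℕ) : s.level (n + 1) ⊆ s.level n := by
  rw [s.level_succ n]; exact diff_subset

lemma level_mono {m n : ℕ} (h : m ≤ n) : s.level n ⊆ s.level m := by
  induction n, h using Nat.le_induction with
  | base => exact subset_rfl
  | succ n hmn ih => exact (s.level_succ_subset n).trans ih

lemma K_subset_level (n : ℕ) : K ⊆ s.level n := by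
  intro x hx
  rw [← s.inter_eq] at hx
  exact mem_iInter.mp hx n

lemma Ioo_subset_level (n : ℕ) : Ioo (s.B n) (s.C n) ⊆ s.level n := fun x hx =>
  s.Icc_subset_level n ⟨(s.hAB n).trans hx.1.le, hx.2.le.trans (s.hCD n)⟩

lemma notmem_level {n m : ℕ} (h : n < m) {x : ℝ} (hx : x ∈ Ioo (s.B n) (s.C n)) :
    x ∉ s.level m := by
  intro hxm
  have h1 : x ∈ s.level (n + 1) := s.level_mono h hxm
  rw [s.level_succ n] at h1
  exact h1.2 hx

lemma B_mem_level (n m : ℕ) : s.B n ∈ s.level m := by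
  have hbase : s.B n ∈ s.level n :=
    s.Icc_subset_level n ⟨s.hAB n, (s.hBC n).le.trans (s.hCD n)⟩
  rcases le_or_gt m n with h | h
  · exact s.level_mono h hbase
  · induction m, h using Nat.le_induction with
    | base =>
      rw [s.level_succ n]
      exact ⟨hbase, fun hc => lt_irrefl _ hc.1⟩
    | succ m hm ih =>
      rw [s.level_succ m]
      refine ⟨ih, fun hc => ?_⟩
      -- hc : B m < B n < C m ; pick x between B n and min (C n) (C m)
      set x := (s.B n + min (s.C n) (s.C m)) / 2 with hxdef
      have hmin : s.B n < min (s.C n) (s.C m) := lt_min (s.hBC n) hc.2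
      have hx1 : s.B n < x := by rw [hxdef]; linarith
      have hx2 : x < min (s.C n) (s.C m) := by rw [hxdef]; linarith
      have hxIoo_n : x ∈ Ioo (s.B n) (s.C n) := ⟨hx1, hx2.trans_le (min_le_left _ _)⟩
      have hxIoo_m : x ∈ Ioo (s.B m) (s.C m) :=
        ⟨hc.1.trans hx1, hx2.trans_le (min_le_right _ _)⟩
      have hxm : x ∈ s.level m := s.Ioo_subset_level m hxIoo_m
      exact s.notmem_level hm hxIoo_n hxm

lemma C_mem_level (n m : ℕ) : s.C n ∈ s.level m := by
  have hbase : s.C n ∈ s.level n :=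
    s.Icc_subset_level n ⟨(s.hAB n).trans (s.hBC n).le, s.hCD n⟩
  rcases le_or_gt m n with h | h
  · exact s.level_mono h hbase
  · induction m, h using Nat.le_induction with
    | base =>
      rw [s.level_succ n]
      exact ⟨hbase, fun hc => lt_irrefl _ hc.2⟩
    | succ m hm ih =>
      rw [s.level_succ m]
      refine ⟨ih, fun hc => ?_⟩
      -- hc : B m < C n < C m ; pick x between max (B n) (B m) and C n
      set x := (max (s.B n) (s.B m) + s.C n) / 2 with hxdef
      have hmax : max (s.B n) (s.B m) < s.C n := max_lt (s.hBC n) hc.1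
      have hx1 : max (s.B n) (s.B m) < x := by rw [hxdef]; linarith
      have hx2 : x < s.C n := by rw [hxdef]; linarith
      have hxIoo_n : x ∈ Ioo (s.B n) (s.C n) :=
        ⟨(le_max_left _ _).trans_lt hx1, hx2⟩
      have hxIoo_m : x ∈ Ioo (s.B m) (s.C m) :=
        ⟨(le_max_right _ _).trans_lt hx1, hx2.trans hc.2⟩
      have hxm : x ∈ s.level m := s.Ioo_subset_level m hxIoo_m
      exact s.notmem_level hm hxIoo_n hxm

lemma B_mem_K (n : ℕ) : s.B n ∈ K := by
  have h : s.B n ∈ ⋂ m, s.level m := mem_iInter.mpr (s.B_mem_level n)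
  rwa [s.inter_eq] at h

lemma C_mem_K (n : ℕ) : s.C n ∈ K := by
  have h : s.C n ∈ ⋂ m, s.level m := mem_iInter.mpr (s.C_mem_level n)
  rwa [s.inter_eq] at h

lemma isHole (n : ℕ) : IsHole K (s.B n) (s.C n) := by
  refine ⟨s.hBC n, s.B_mem_K n, s.C_mem_K n, ?_⟩
  ext x
  simp only [mem_inter_iff, mem_empty_iff_false, iff_false, not_and]
  intro hx hxK
  exact s.notmem_level (Nat.lt_succ_self n) hx (s.K_subset_level (n + 1) hxK)

lemma level_subset_Icc (n : ℕ) : s.level n ⊆ Icc (sInf K) (sSup K) := by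
  have h := s.level_mono (Nat.zero_le n)
  rwa [s.level_zero] at h

lemma A_mem_level (n : ℕ) : s.A n ∈ s.level n :=
  s.Icc_subset_level n ⟨le_rfl, s.le_AD n⟩

lemma D_mem_level (n : ℕ) : s.D n ∈ s.level n :=
  s.Icc_subset_level n ⟨s.le_AD n, le_rfl⟩

lemma sInf_le_A (n : ℕ) : sInf K ≤ s.A n :=
  (s.level_subset_Icc n (s.A_mem_level n)).1

lemma D_le_sSup (n : ℕ) : s.D n ≤ sSup K :=
  (s.level_subset_Icc n (s.D_mem_level n)).2

lemma level_isClosed (n : ℕ) : IsClosed (s.level n) := by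
  induction n with
  | zero => rw [s.level_zero]; exact isClosed_Icc
  | succ n ih => rw [s.level_succ n]; exact ih.sdiff isOpen_Ioo

lemma cover {n : ℕ} {x : ℝ} (hx0 : x ∈ Icc (sInf K) (sSup K)) (hxn : x ∉ s.level n) :
    ∃ i, i < n ∧ x ∈ Ioo (s.B i) (s.C i) := by
  induction n with
  | zero =>
    rw [s.level_zero] at hxn; exact absurd hx0 hxn
  | succ n ih =>
    by_cases h : x ∈ s.level n
    · refine ⟨n, Nat.lt_succ_self n, ?_⟩
      rw [s.level_succ n] at hxn
      by_contra hc
      exact hxn ⟨h, hc⟩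
    · obtain ⟨i, hi, hmem⟩ := ih h
      exact ⟨i, Nat.lt_succ_of_lt hi, hmem⟩

section thick

lemma thickL (hgap : s.GapCondition) {i j : ℕ} (hne : j ≠ i) (hlen : s.C i - s.B i ≤ s.C j - s.B j)
    (hle : s.C j ≤ s.B i) : s.B i - s.C j > s.C i - s.B i := by
  rcases hne.lt_or_gt with hj | hj
  · -- j < i : show C j ≤ A i
    have hCA : s.C j ≤ s.A i := by
      by_contra hAC
      push_neg at hAC
      set x := (max (s.A i) (s.B j) + s.C j) / 2 with hxdef
      have hmax : max (s.A i) (s.B j) < s.C j := max_lt hAC (s.hBC j)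
      have hx1 : max (s.A i) (s.B j) < x := by rw [hxdef]; linarith
      have hx2 : x < s.C j := by rw [hxdef]; linarith
      have hxIoo : x ∈ Ioo (s.B j) (s.C j) := ⟨(le_max_right _ _).trans_lt hx1, hx2⟩
      have hxIcc : x ∈ Icc (s.A i) (s.D i) :=
        ⟨((le_max_left _ _).trans_lt hx1).le,
          (hx2.trans_le (hle.trans ((s.hBC i).le.trans (s.hCD i)))).le⟩
      exact s.notmem_level hj hxIoo (s.Icc_subset_level i hxIcc)
    linarith [(hgap i).1, s.hBC i]
  · -- i < j : show D j ≤ B i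
    have hDB : s.D j ≤ s.B i := by
      by_contra h
      push_neg at h
      set x := (s.B i + min (s.C i) (s.D j)) / 2 with hxdef
      have hmin : s.B i < min (s.C i) (s.D j) := lt_min (s.hBC i) h
      have hx1 : s.B i < x := by rw [hxdef]; linarith
      have hx2 : x < min (s.C i) (s.D j) := by rw [hxdef]; linarith
      have hxIoo : x ∈ Ioo (s.B i) (s.C i) := ⟨hx1, hx2.trans_le (min_le_left _ _)⟩
      have hxIcc : x ∈ Icc (s.A j) (s.D j) :=
        ⟨(((s.hAB j).trans ((s.hBC j).le)).trans hle).trans hx1.le,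
          (hx2.trans_le (min_le_right _ _)).le⟩
      exact s.notmem_level hj hxIoo (s.Icc_subset_level j hxIcc)
    linarith [(hgap j).2]

lemma thickR (hgap : s.GapCondition) {i j : ℕ} (hne : j ≠ i) (hlen : s.C i - s.B i ≤ s.C j - s.B j)
    (hle : s.C i ≤ s.B j) : s.B j - s.C i > s.C i - s.B i := by
  rcases hne.lt_or_gt with hj | hj
  · -- j < i : show D i ≤ B j
    have hDB : s.D i ≤ s.B j := by
      by_contra h
      push_neg at h
      set x := (s.B j + min (s.C j) (s.D i)) / 2 with hxdef
      have hmin : s.B j < min (s.C j) (s.D i) := lt_min (s.hBC j) h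
      have hx1 : s.B j < x := by rw [hxdef]; linarith
      have hx2 : x < min (s.C j) (s.D i) := by rw [hxdef]; linarith
      have hxIoo : x ∈ Ioo (s.B j) (s.C j) := ⟨hx1, hx2.trans_le (min_le_left _ _)⟩
      have hxIcc : x ∈ Icc (s.A i) (s.D i) :=
        ⟨(((s.hAB i).trans (s.hBC i).le).trans hle).trans hx1.le,
          (hx2.trans_le (min_le_right _ _)).le⟩
      exact s.notmem_level hj hxIoo (s.Icc_subset_level i hxIcc)
    linarith [(hgap i).2]
  · -- i < j : show C i ≤ A j
    have hCA : s.C i ≤ s.A j := by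
      by_contra h
      push_neg at h
      set x := (max (s.B i) (s.A j) + s.C i) / 2 with hxdef
      have hmax : max (s.B i) (s.A j) < s.C i := max_lt (s.hBC i) h
      have hx1 : max (s.B i) (s.A j) < x := by rw [hxdef]; linarith
      have hx2 : x < s.C i := by rw [hxdef]; linarith
      have hxIoo : x ∈ Ioo (s.B i) (s.C i) := ⟨(le_max_left _ _).trans_lt hx1, hx2⟩
      have hxIcc : x ∈ Icc (s.A j) (s.D j) :=
        ⟨((le_max_right _ _).trans_lt hx1).le,
          ((hx2.trans_le hle).trans_le ((s.hBC j).le.trans (s.hCD j))).le⟩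
      exact s.notmem_level hj hxIoo (s.Icc_subset_level j hxIcc)
    linarith [(hgap j).1, s.hBC j]

end thick

end SlowSubdivision

/-- A finite system of closed "pieces" with listed gaps, used to run the
finite version of the gap lemma on the levels of a slow subdivision. -/
structure GapSystem where
  S : Set ℝ
  lo : ℝ
  hi : ℝ
  N : ℕ
  b : ℕ → ℝ
  c : ℕ → ℝ
  hlo : lo ∈ S
  hhi : hi ∈ S
  hsub : S ⊆ Icc lo hi
  hbmem : ∀ i, i < N → b i ∈ S
  hcmem : ∀ i, i < N → c i ∈ S
  hbc : ∀ i, i < N → b i < c i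
  hdisj : ∀ i, i < N → ∀ x, x ∈ Ioo (b i) (c i) → x ∉ S
  hcover : ∀ x, x ∈ Icc lo hi → x ∉ S → ∃ i, i < N ∧ x ∈ Ioo (b i) (c i)
  hthickL : ∀ i, i < N → ∀ j, j < N → j ≠ i → c i - b i ≤ c j - b j →
    c j ≤ b i → b i - c j > c i - b i
  hthickR : ∀ i, i < N → ∀ j, j < N → j ≠ i → c i - b i ≤ c j - b j →
    c i ≤ b j → b j - c i > c i - b i
  hhullL : ∀ i, i < N → b i - lo > c i - b i
  hhullR : ∀ i, i < N → hi - c i > c i - b i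

namespace GapSystem

def len (P : GapSystem) (i : ℕ) : ℝ := P.c i - P.b i

noncomputable def pot1 (P Q : GapSystem) (s : ℝ) : ℕ :=
  ((Finset.range P.N ×ˢ Finset.range Q.N).filter fun p => P.len p.1 + Q.len p.2 < s).card

noncomputable def pot (P Q : GapSystem) (s : ℝ) : ℕ := pot1 P Q s + pot1 Q P s

lemma pot1_mono (P Q : GapSystem) {s s' : ℝ} (h : s' ≤ s) : pot1 P Q s' ≤ pot1 P Q s :=
  Finset.card_le_card (Finset.monotone_filter_right _ fun p _ hp => lt_of_lt_of_le hp h)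

lemma pot1_lt (P Q : GapSystem) {s s' : ℝ} (hss : s' < s) {i j : ℕ}
    (hi : i < P.N) (hj : j < Q.N) (hsum : P.len i + Q.len j = s') :
    pot1 P Q s' < pot1 P Q s := by
  apply Finset.card_lt_card
  refine (Finset.ssubset_iff_of_subset
    (Finset.monotone_filter_right _ fun p _ hp => lt_trans hp hss)).mpr ?_
  refine ⟨(i, j), ?_, ?_⟩
  · rw [Finset.mem_filter, Finset.mem_product, Finset.mem_range, Finset.mem_range]
    exact ⟨⟨hi, hj⟩, hsum ▸ hss⟩
  · rw [Finset.mem_filter]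
    rintro ⟨-, hlt⟩
    rw [hsum] at hlt
    exact lt_irrefl _ hlt

lemma pot_swap_lt (P Q : GapSystem) {s s' : ℝ} (hss : s' < s) {i j : ℕ}
    (hi : i < P.N) (hj : j < Q.N) (hsum : P.len i + Q.len j = s') :
    pot Q P s' < pot P Q s := by
  have h1 : pot1 P Q s' < pot1 P Q s := pot1_lt P Q hss hi hj hsum
  have h2 : pot1 Q P s' ≤ pot1 Q P s := pot1_mono Q P hss.le
  unfold pot
  omega

/-- The core recursive step of the (finite) gap lemma: a linked pair of gaps
(the first system's gap on the left) forces an intersection point. -/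
lemma core : ∀ k : ℕ, ∀ P Q : GapSystem, ∀ i j : ℕ, i < P.N → j < Q.N →
    P.b i < Q.b j → Q.b j < P.c i → P.c i < Q.c j →
    pot P Q (P.len i + Q.len j) < k → ∃ x, x ∈ P.S ∧ x ∈ Q.S := by
  intro k
  induction k with
  | zero => intro _ _ _ _ _ _ _ _ _ h; exact absurd h (Nat.not_lt_zero _)
  | succ k ih =>
    intro P Q i j hi hj h1 h2 h3 hpot
    have hlU : 0 < P.len i := by have := P.hbc i hi; unfold len; linarith
    have hlV : 0 < Q.len j := by have := Q.hbc j hj; unfold len; linarith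
    rcases le_or_gt (Q.len j) (P.len i) with hUV | hUV
    · -- the right endpoint of Q's gap
      by_cases hv : Q.c j ∈ P.S
      · exact ⟨Q.c j, hv, Q.hcmem j hj⟩
      have hIcc : Q.c j ∈ Icc P.lo P.hi := by
        refine ⟨le_trans (P.hsub (P.hcmem i hi)).1 h3.le, ?_⟩
        have hr := P.hhullR i hi
        unfold len at hUV
        linarith
      obtain ⟨i', hi', hmem⟩ := P.hcover _ hIcc hv
      have hci : P.c i ≤ P.b i' := by
        by_contra h
        push_neg at h
        exact P.hdisj i' hi' (P.c i) ⟨h, h3.trans hmem.2⟩ (P.hcmem i hi)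
      have hne : i' ≠ i := by
        intro he
        rw [he] at hci
        exact absurd hci (not_le.mpr (P.hbc i hi))
      have hlen' : P.len i' < P.len i := by
        by_contra h
        push_neg at h
        unfold len at h
        have ht := P.hthickR i hi i' hi' hne h hci
        unfold len at hUV
        have := hmem.1
        linarith
      have hb' : Q.b j < P.b i' := lt_of_lt_of_le h2 hci
      refine (ih Q P j i' hj hi' hb' hmem.1 hmem.2 ?_).imp fun x hx => ⟨hx.2, hx.1⟩
      refine lt_of_lt_of_le (pot_swap_lt P Q ?_ hi' hj ?_) (Nat.lt_succ_iff.mp hpot)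
      · linarith
      · ring
    · -- the left endpoint of P's gap
      by_cases hu : P.b i ∈ Q.S
      · exact ⟨P.b i, P.hbmem i hi, hu⟩
      have hIcc : P.b i ∈ Icc Q.lo Q.hi := by
        refine ⟨?_, (h1.trans_le (Q.hsub (Q.hbmem j hj)).2).le⟩
        have hl := Q.hhullL j hj
        unfold len at hUV
        linarith
      obtain ⟨j', hj', hmem⟩ := Q.hcover _ hIcc hu
      have hcj : Q.c j' ≤ Q.b j := by
        by_contra h
        push_neg at h
        exact Q.hdisj j' hj' (Q.b j) ⟨hmem.1.trans h1, h⟩ (Q.hbmem j hj)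
      have hne : j' ≠ j := by
        intro he
        rw [he] at hcj
        exact absurd hcj (not_le.mpr (Q.hbc j hj))
      have hlen' : Q.len j' < Q.len j := by
        by_contra h
        push_neg at h
        unfold len at h
        have ht := Q.hthickL j hj j' hj' hne h hcj
        unfold len at hUV
        have := hmem.2
        linarith
      refine (ih Q P j' i hj' hi hmem.1 hmem.2 (hcj.trans_lt h2) ?_).imp
        fun x hx => ⟨hx.2, hx.1⟩
      refine lt_of_lt_of_le (pot_swap_lt P Q ?_ hi hj' ?_) (Nat.lt_succ_iff.mp hpot)
      · linarith
      · ring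

/-- Starting point: overlapping hulls plus the size condition yield a linked
pair of gaps (or directly a common point). -/
lemma start_aux (P Q : GapSystem)
    (hsizeQ : ∀ j, j < Q.N → Q.len j < P.hi - P.lo)
    (h1 : P.lo ≤ Q.hi) (hlo : Q.lo ≤ P.lo) :
    ∃ x, x ∈ P.S ∧ x ∈ Q.S := by
  by_cases hm : P.lo ∈ Q.S
  · exact ⟨P.lo, P.hlo, hm⟩
  obtain ⟨j, hj, hmem⟩ := Q.hcover P.lo ⟨hlo, h1⟩ hm
  by_cases hv : Q.c j ∈ P.S
  · exact ⟨Q.c j, hv, Q.hcmem j hj⟩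
  have hIcc : Q.c j ∈ Icc P.lo P.hi := by
    constructor
    · exact hmem.2.le
    · have := hsizeQ j hj
      unfold len at this
      linarith [hmem.1]
  obtain ⟨i, hi, hmem2⟩ := P.hcover _ hIcc hv
  have hbi : P.lo ≤ P.b i := (P.hsub (P.hbmem i hi)).1
  refine (core (pot Q P (Q.len j + P.len i) + 1) Q P j i hj hi
    (hmem.1.trans_le hbi) hmem2.1 hmem2.2 (Nat.lt_succ_self _)).imp
    fun x hx => ⟨hx.2, hx.1⟩

lemma start (P Q : GapSystem)
    (hsizeP : ∀ i, i < P.N → P.len i < Q.hi - Q.lo)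
    (hsizeQ : ∀ j, j < Q.N → Q.len j < P.hi - P.lo)
    (h1 : P.lo ≤ Q.hi) (h2 : Q.lo ≤ P.hi) :
    ∃ x, x ∈ P.S ∧ x ∈ Q.S := by
  rcases le_total Q.lo P.lo with hlo | hlo
  · exact start_aux P Q hsizeQ h1 hlo
  · exact (start_aux Q P hsizeP h2 hlo).imp fun x hx => ⟨hx.2, hx.1⟩

end GapSystem

namespace SlowSubdivision

/-- The gap system given by level `n` of a slow subdivision. -/
noncomputable def gapSystem {K : Set ℝ} (s : SlowSubdivision K)
    (hKne : K.Nonempty) (hKc : IsCompact K) (hgap : s.GapCondition) (n : ℕ) :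
    GapSystem where
  S := s.level n
  lo := sInf K
  hi := sSup K
  N := n
  b := s.B
  c := s.C
  hlo := s.K_subset_level n (hKc.sInf_mem hKne)
  hhi := s.K_subset_level n (hKc.sSup_mem hKne)
  hsub := s.level_subset_Icc n
  hbmem := fun i _ => s.B_mem_level i n
  hcmem := fun i _ => s.C_mem_level i n
  hbc := fun i _ => s.hBC i
  hdisj := fun i hin x hx => s.notmem_level hin hx
  hcover := fun x h1 h2 => s.cover h1 h2
  hthickL := fun i _ j _ hne hlen hle => s.thickL hgap hne hlen hle
  hthickR := fun i _ j _ hne hlen hle => s.thickR hgap hne hlen hle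
  hhullL := fun i _ => by have h1 := s.sInf_le_A i; have h2 := (hgap i).1; linarith
  hhullR := fun i _ => by have h1 := s.D_le_sSup i; have h2 := (hgap i).2; linarith

/-- The gap system given by the reflection `t - ·` of level `n`. -/
noncomputable def gapSystemRefl {F : Set ℝ} (s : SlowSubdivision F)
    (hFne : F.Nonempty) (hFc : IsCompact F) (hgap : s.GapCondition) (t : ℝ) (n : ℕ) :
    GapSystem where
  S := (fun y => t - y) '' s.level n
  lo := t - sSup F
  hi := t - sInf F
  N := n
  b := fun j => t - s.C j
  c := fun j => t - s.B j
  hlo := ⟨sSup F, s.K_subset_level n (hFc.sSup_mem hFne), rfl⟩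
  hhi := ⟨sInf F, s.K_subset_level n (hFc.sInf_mem hFne), rfl⟩
  hsub := by
    rintro z ⟨y, hy, rfl⟩
    have h := s.level_subset_Icc n hy
    simp only [mem_Icc]
    exact ⟨by linarith [h.2], by linarith [h.1]⟩
  hbmem := fun j _ => ⟨s.C j, s.C_mem_level j n, rfl⟩
  hcmem := fun j _ => ⟨s.B j, s.B_mem_level j n, rfl⟩
  hbc := fun j _ => by have := s.hBC j; linarith
  hdisj := by
    rintro j hjn x hx ⟨y, hy, rfl⟩
    simp only [mem_Ioo] at hx
    exact s.notmem_level hjn ⟨by linarith [hx.2], by linarith [hx.1]⟩ hy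
  hcover := by
    intro x hxI hxS
    simp only [mem_Icc] at hxI
    have hyn : t - x ∉ s.level n := fun h => hxS ⟨t - x, h, by ring⟩
    have hy0 : t - x ∈ Icc (sInf F) (sSup F) := ⟨by linarith [hxI.2], by linarith [hxI.1]⟩
    obtain ⟨i, hin, hIoo⟩ := s.cover hy0 hyn
    exact ⟨i, hin, by
      simp only [mem_Ioo]
      exact ⟨by linarith [hIoo.2], by linarith [hIoo.1]⟩⟩
  hthickL := by
    intro i _ j _ hne hlen hle
    have h := s.thickR hgap hne (by linarith) (by linarith)
    linarith
  hthickR := by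
    intro i _ j _ hne hlen hle
    have h := s.thickL hgap hne (by linarith) (by linarith)
    linarith
  hhullL := fun i _ => by
    have h1 := s.D_le_sSup i; have h2 := (hgap i).2; linarith
  hhullR := fun i _ => by
    have h1 := s.sInf_le_A i; have h2 := (hgap i).1; linarith

end SlowSubdivision

/-- **Hall's theorem on sums of Cantor sets.** Let `K` and `F` be Cantor
sets in `ℝ`, each admitting a slow subdivision satisfying the gap condition, and
suppose the pair `(K, F)` satisfies the size condition: the diameter of `K` exceeds
the length of every hole of `F` and vice versa. Then
`K + F = [min K + min F, max K + max F]`. -/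
theorem hall_sum_of_cantor_sets (K F : Set ℝ)
    (hK : IsCantorSet K) (hF : IsCantorSet F)
    (sK : SlowSubdivision K) (hsK : sK.GapCondition)
    (sF : SlowSubdivision F) (hsF : sF.GapCondition)
    (hsize1 : ∀ u v : ℝ, IsHole F u v → v - u < sSup K - sInf K)
    (hsize2 : ∀ u v : ℝ, IsHole K u v → v - u < sSup F - sInf F) :
    K + F = Set.Icc (sInf K + sInf F) (sSup K + sSup F) := by
  obtain ⟨hKne, hKc, -, -⟩ := hK
  obtain ⟨hFne, hFc, -, -⟩ := hF
  apply Set.Subset.antisymm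
  · rintro z hz
    rw [Set.mem_add] at hz
    obtain ⟨x, hx, y, hy, rfl⟩ := hz
    exact ⟨add_le_add (csInf_le hKc.bddBelow hx) (csInf_le hFc.bddBelow hy),
      add_le_add (le_csSup hKc.bddAbove hx) (le_csSup hFc.bddAbove hy)⟩
  · intro t ht
    -- the intersection of the level sets with the reflected level sets
    set V : ℕ → Set ℝ :=
      fun n => sK.level n ∩ ((fun y => t - y) '' sF.level n) with hVdef
    have hVne : ∀ n, (V n).Nonempty := by
      intro n
      have key := GapSystem.start (sK.gapSystem hKne hKc hsK n)
        (sF.gapSystemRefl hFne hFc hsF t n) ?_ ?_ ?_ ?_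
      · obtain ⟨x, hx1, hx2⟩ := key
        exact ⟨x, hx1, hx2⟩
      · intro i hin
        have hh := hsize2 _ _ (sK.isHole i)
        show sK.C i - sK.B i < (t - sInf F) - (t - sSup F)
        linarith
      · intro j hjn
        have hh := hsize1 _ _ (sF.isHole j)
        show (t - sF.B j) - (t - sF.C j) < sSup K - sInf K
        linarith
      · show sInf K ≤ t - sInf F
        linarith [ht.1]
      · show t - sSup F ≤ sSup K
        linarith [ht.2]
    have hVsub : ∀ n, V (n + 1) ⊆ V n := fun n =>
      inter_subset_inter (sK.level_succ_subset n)
        (image_mono (sF.level_succ_subset n))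
    have hVcl : ∀ n, IsClosed (V n) := by
      intro n
      have hFcpt : IsCompact (sF.level n) :=
        IsCompact.of_isClosed_subset isCompact_Icc (sF.level_isClosed n)
          (sF.level_subset_Icc n)
      have himg : IsCompact ((fun y => t - y) '' sF.level n) :=
        hFcpt.image (continuous_const.sub continuous_id)
      exact (sK.level_isClosed n).inter himg.isClosed
    have hV0 : IsCompact (V 0) :=
      IsCompact.of_isClosed_subset isCompact_Icc (hVcl 0)
        ((inter_subset_left).trans (sK.level_subset_Icc 0))
    obtain ⟨x, hx⟩ := IsCompact.nonempty_iInter_of_sequence_nonempty_isCompact_isClosed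
      V hVsub hVne hV0 hVcl
    rw [mem_iInter] at hx
    have hxK : x ∈ K := by
      have h : x ∈ ⋂ n, sK.level n := mem_iInter.mpr fun n => (hx n).1
      rwa [sK.inter_eq] at h
    have hyF : t - x ∈ F := by
      have h : t - x ∈ ⋂ n, sF.level n := by
        refine mem_iInter.mpr fun n => ?_
        obtain ⟨y, hy, hyx⟩ := (hx n).2
        simp only at hyx
        have hyx' : y = t - x := by linarith [hyx]
        rwa [← hyx']
      rwa [sF.inter_eq] at h
    rw [Set.mem_add]
    exact ⟨x, hxK, t - x, hyF, by ring⟩
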